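/- If Re(c) > Re(a) > 0, then the confluent hypergeometric function satisfies the integral representation Φ(a; c; z) = (Γ(c)/(Γ(a)Γ(c-a))) ∫₀¹ t^{a-1}(1-t)^{c-a-1} e^{tz} dt for all z ∈ ℂ. -/

import Mathlib

open Complex intervalIntegral

/-- Pochhammer symbol `(x)_j` for complex `x`. -/
def cpoch (x : ℂ) (j : ℕ) : ℂ := ∏ i ∈ Finset.range j, (x + i)

/-- Kummer confluent hypergeometric series. -/
noncomputable def hyp1F1 (a c z : ℂ) : ℂ :=
  ∑' j : ℕ, cpoch a j * z ^ j / (cpoch c j * j.factorial)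

open MeasureTheory

lemma cpoch_ne_zero {x : ℂ} (hx : 0 < x.re) (j : ℕ) : cpoch x j ≠ 0 := by
  apply Finset.prod_ne_zero_iff.2
  intro i _ h
  have h2 : 0 < (x + (i : ℂ)).re := by
    rw [Complex.add_re]
    have : ((i : ℂ)).re = (i : ℝ) := by simp
    rw [this]; positivity
  rw [h] at h2; simp at h2

lemma Gamma_add_nat {x : ℂ} (hx : 0 < x.re) (j : ℕ) :
    Complex.Gamma (x + j) = Complex.Gamma x * cpoch x j := by
  induction j with
  | zero => simp [cpoch]
  | succ n ih =>
      have hne : x + (n : ℂ) ≠ 0 := by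
        intro h
        have h2 : 0 < (x + (n : ℂ)).re := by
          rw [Complex.add_re]
          have : ((n : ℂ)).re = (n : ℝ) := by simp
          rw [this]; positivity
        rw [h] at h2; simp at h2
      have : x + ((n + 1 : ℕ) : ℂ) = (x + n) + 1 := by push_cast; ring
      rw [this, Complex.Gamma_add_one _ hne, ih]
      simp only [cpoch, Finset.prod_range_succ]
      ring

theorem confluent_integral_representation (a c : ℂ)
    (ha : 0 < a.re) (hac : a.re < c.re) :
    ∀ z : ℂ,
      hyp1F1 a c z
        = Complex.Gamma c / (Complex.Gamma a * Complex.Gamma (c - a)) *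
            ∫ t in (0:ℝ)..1,
              (t : ℂ) ^ (a - 1) * ((1 : ℂ) - t) ^ (c - a - 1) * Complex.exp (t * z) := by
  intro z
  have hca : 0 < (c - a).re := by rw [Complex.sub_re]; linarith
  have hc : 0 < c.re := lt_trans ha hac
  set F : ℕ → ℝ → ℂ := fun j t =>
    (t:ℂ)^(a-1) * ((1:ℂ)-t) ^ (c-a-1) * ((t*z)^j / (j.factorial : ℂ)) with hF
  have hre : ∀ j : ℕ, 0 < (a + (j:ℂ)).re := by
    intro j
    rw [Complex.add_re]
    have : ((j : ℂ)).re = (j : ℝ) := by simp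
    rw [this]; positivity
  have hcre : ∀ j : ℕ, 0 < (c + (j:ℂ)).re := by
    intro j
    rw [Complex.add_re]
    have : ((j : ℂ)).re = (j : ℝ) := by simp
    rw [this]; positivity
  -- G j integrable
  have hGint : ∀ j : ℕ, IntegrableOn
      (fun t:ℝ => (t:ℂ)^(a + j - 1) * ((1:ℂ)-t)^(c-a-1)) (Set.Ioc (0:ℝ) 1) := by
    intro j
    exact (intervalIntegrable_iff_integrableOn_Ioc_of_le zero_le_one).1
      (Complex.betaIntegral_convergent (hre j) hca)
  have hEq : ∀ j : ℕ, Set.EqOn (F j)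
      (fun t:ℝ => (z^j/(j.factorial:ℂ)) * ((t:ℂ)^(a + j - 1) * ((1:ℂ)-t)^(c-a-1)))
      (Set.Ioc (0:ℝ) 1) := by
    intro j t ht
    have ht0 : (t:ℂ) ≠ 0 := by
      exact_mod_cast ne_of_gt ht.1
    simp only [hF]
    rw [mul_pow, ← Complex.cpow_natCast (t:ℂ) j,
        show a + (j:ℂ) - 1 = (a-1) + j from by ring, Complex.cpow_add _ _ ht0]
    ring
  have hFint : ∀ j : ℕ, IntegrableOn (F j) (Set.Ioc (0:ℝ) 1) := by
    intro j
    exact IntegrableOn.congr_fun ((hGint j).const_mul _) (hEq j).symm measurableSet_Ioc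
  -- value of each integral
  have hval : ∀ j : ℕ, ∫ t in Set.Ioc (0:ℝ) 1, F j t
      = z^j/(j.factorial:ℂ) *
        (Complex.Gamma (a+j) * Complex.Gamma (c-a) / Complex.Gamma (c+j)) := by
    intro j
    rw [setIntegral_congr_fun measurableSet_Ioc (hEq j), MeasureTheory.integral_const_mul]
    congr 1
    have hcj : Complex.Gamma (c + (j:ℂ)) ≠ 0 := Complex.Gamma_ne_zero_of_re_pos (hcre j)
    have hbeta := Complex.Gamma_mul_Gamma_eq_betaIntegral (hre j) hca
    rw [show a + (j:ℂ) + (c - a) = c + j from by ring] at hbeta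
    have : ∫ t in Set.Ioc (0:ℝ) 1, (t:ℂ)^(a + j - 1) * ((1:ℂ)-t)^(c-a-1)
        = Complex.betaIntegral (a + j) (c - a) := by
      rw [Complex.betaIntegral, intervalIntegral.integral_of_le zero_le_one]
    rw [this, eq_div_iff hcj, hbeta]
    ring
  -- summability of integrals of norms
  have hBint : IntegrableOn (fun t:ℝ => ‖(t:ℂ)^(a-1) * ((1:ℂ)-t)^(c-a-1)‖)
      (Set.Ioc (0:ℝ) 1) := by
    exact ((intervalIntegrable_iff_integrableOn_Ioc_of_le zero_le_one).1
      (Complex.betaIntegral_convergent ha hca)).norm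
  have hsum : Summable (fun j : ℕ => ∫ t in Set.Ioc (0:ℝ) 1, ‖F j t‖) := by
    refine Summable.of_nonneg_of_le (fun j => integral_nonneg fun t => norm_nonneg _)
      (fun j => ?_) ((Real.summable_pow_div_factorial ‖z‖).mul_right
        (∫ t in Set.Ioc (0:ℝ) 1, ‖(t:ℂ)^(a-1) * ((1:ℂ)-t)^(c-a-1)‖))
    rw [← MeasureTheory.integral_const_mul]
    refine setIntegral_mono_on ((hFint j).norm) (hBint.const_mul _) measurableSet_Ioc ?_
    intro t ht
    have h1 : ‖F j t‖ = ‖(t:ℂ)^(a-1) * ((1:ℂ)-t)^(c-a-1)‖ * (‖(t:ℂ)*z‖^j / (j.factorial:ℝ)) := by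
      simp only [hF, norm_mul, norm_div, norm_pow, Complex.norm_natCast]
    have h2 : ‖(t:ℂ)*z‖ ≤ ‖z‖ := by
      rw [norm_mul, Complex.norm_real, Real.norm_eq_abs]
      have h3 : |t| ≤ 1 := abs_le.2 ⟨by linarith [ht.1], ht.2⟩
      nlinarith [norm_nonneg z, abs_nonneg t]
    rw [h1, mul_comm (‖z‖^j / (j.factorial:ℝ))]
    gcongr
  -- interchange
  have key : ∑' j : ℕ, ∫ t in Set.Ioc (0:ℝ) 1, F j t
      = ∫ t in Set.Ioc (0:ℝ) 1, ∑' j : ℕ, F j t :=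
    integral_tsum_of_summable_integral_norm hFint hsum
  have hptw : ∀ t : ℝ, ∑' j : ℕ, F j t
      = (t:ℂ)^(a-1) * ((1:ℂ)-t)^(c-a-1) * Complex.exp (t*z) := by
    intro t
    rw [Complex.exp_eq_exp_ℂ, NormedSpace.exp_eq_tsum_div, ← tsum_mul_left]
  have hGa : Complex.Gamma a ≠ 0 := Complex.Gamma_ne_zero_of_re_pos ha
  have hGca : Complex.Gamma (c-a) ≠ 0 := Complex.Gamma_ne_zero_of_re_pos hca
  have hGc : Complex.Gamma c ≠ 0 := Complex.Gamma_ne_zero_of_re_pos hc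
  rw [intervalIntegral.integral_of_le zero_le_one]
  have : (∫ t in Set.Ioc (0:ℝ) 1,
      (t:ℂ)^(a-1) * ((1:ℂ)-t)^(c-a-1) * Complex.exp (t*z))
      = ∑' j : ℕ, ∫ t in Set.Ioc (0:ℝ) 1, F j t := by
    rw [key]
    exact setIntegral_congr_fun measurableSet_Ioc fun t _ => (hptw t).symm
  rw [this, hyp1F1, ← tsum_mul_left]
  refine tsum_congr fun j => ?_
  rw [hval j, Gamma_add_nat ha j, Gamma_add_nat hc j]
  have hpc : cpoch c j ≠ 0 := cpoch_ne_zero hc j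
  have hfac : ((j.factorial : ℂ)) ≠ 0 := by exact_mod_cast j.factorial_ne_zero
  field_simp
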